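/- For every real c > 0 and all reals e ≥ 0 and f ≥ 0, the integral ∫₀^∞ exp(-c²·x)·Q(e, f·√(2x)) dx converges and equals (1/c²)·{1 - (f²/(c²+f²))·exp(-c²·e²/(2(c²+f²)))}. -/

import Mathlib

open MeasureTheory Real Set
open scoped ENNReal

/-- Modified Bessel function of the first kind, order zero:
`I₀(x) = ∑ (x²/4)ⁿ / (n!)²`. -/
noncomputable def besselI0 (x : ℝ) : ℝ :=
  ∑' n : ℕ, (x ^ 2 / 4) ^ n / ((Nat.factorial n : ℝ)) ^ 2

/-- First-order Marcum Q-function: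
`Q(a,b) = ∫_b^∞ x · exp(-(x²+a²)/2) · I₀(a·x) dx`. -/
noncomputable def marcumQ (a b : ℝ) : ℝ :=
  ∫ x in Set.Ioi b, x * Real.exp (-(x ^ 2 + a ^ 2) / 2) * besselI0 (a * x)

/-- Normalized Rician fading density with Rician factor `K`. -/
noncomputable def ricianPDF (K h : ℝ) : ℝ :=
  (1 / 2) * Real.exp (-K - h / 2) * besselI0 (Real.sqrt (2 * K * h))


lemma besselI0_summable (x : ℝ) :
    Summable (fun n : ℕ => (x ^ 2 / 4) ^ n / ((Nat.factorial n : ℝ)) ^ 2) := by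
  refine Summable.of_nonneg_of_le (fun n => by positivity) (fun n => ?_)
    (Real.summable_pow_div_factorial (x ^ 2 / 4))
  have h1 : (0:ℝ) < n.factorial := by positivity
  rw [div_le_div_iff₀ (by positivity) h1]
  have : ((n.factorial : ℝ)) ≤ (n.factorial : ℝ)^2 := by
    nlinarith [Nat.one_le_iff_ne_zero.2 (Nat.factorial_ne_zero n),
      (by exact_mod_cast Nat.one_le_iff_ne_zero.2 (Nat.factorial_ne_zero n) : (1:ℝ) ≤ n.factorial)]
  nlinarith [pow_nonneg (by positivity : (0:ℝ) ≤ x^2/4) n]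

lemma besselI0_nonneg (x : ℝ) : 0 ≤ besselI0 x :=
  tsum_nonneg (fun n => by positivity)

lemma measurable_besselI0 : Measurable besselI0 := by
  apply measurable_of_tendsto_metrizable
    (f := fun N x => ∑ n ∈ Finset.range N, (x ^ 2 / 4) ^ n / ((Nat.factorial n : ℝ)) ^ 2)
  · intro N; exact Finset.measurable_sum _ (fun n _ => by fun_prop)
  · rw [tendsto_pi_nhds]
    exact fun x => (besselI0_summable x).hasSum.tendsto_sum_nat

lemma term_integral {s : ℝ} (hs : 0 < s) (n : ℕ) :
    ∫ x in Ioi (0:ℝ), x ^ (2*n+1) * Real.exp (-(s/2) * x^2) =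
      (2/s)^n * (Nat.factorial n) / s := by
  have hn : (0:ℝ) ≤ n := n.cast_nonneg
  have h := integral_rpow_mul_exp_neg_mul_rpow (p := 2) (q := (2*n+1 : ℝ))
    (by norm_num) (by linarith) (half_pos hs)
  rw [show ∫ x in Ioi (0:ℝ), x ^ ((2*(n:ℝ)+1)) * Real.exp (-(s/2) * x ^ (2:ℝ))
      = ∫ x in Ioi (0:ℝ), x ^ (2*n+1) * Real.exp (-(s/2) * x^2) from
    setIntegral_congr_fun measurableSet_Ioi (fun x hx => by
      rw [show ((2*(n:ℝ)+1)) = ((2*n+1 : ℕ):ℝ) by push_cast; ring,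
        rpow_natCast, show (2:ℝ) = ((2:ℕ):ℝ) by norm_num, rpow_natCast])] at h
  rw [h, show -(2 * (n:ℝ) + 1 + 1) / 2 = -((n:ℝ)+1) by ring,
    show (2 * (n:ℝ) + 1 + 1) / 2 = (n:ℝ) + 1 by ring,
    Real.Gamma_nat_eq_factorial, rpow_neg (by positivity),
    show ((n:ℝ)+1) = ((n+1 : ℕ):ℝ) by push_cast; ring, rpow_natCast]
  rw [div_pow, div_pow, pow_succ]
  have : s^n ≠ 0 := by positivity
  field_simp
  ring

lemma term_integrableOn {s : ℝ} (hs : 0 < s) (n : ℕ) :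
    IntegrableOn (fun x : ℝ => x ^ (2*n+1) * Real.exp (-(s/2) * x^2)) (Ioi 0) := by
  have h := integrableOn_rpow_mul_exp_neg_mul_sq (half_pos hs)
    (s := (2*n+1 : ℝ)) (by have : (0:ℝ) ≤ n := n.cast_nonneg; linarith)
  refine h.congr_fun (fun x hx => ?_) measurableSet_Ioi
  dsimp only
  rw [show ((2*(n:ℝ)+1)) = ((2*n+1 : ℕ):ℝ) by push_cast; ring, rpow_natCast]

lemma exp_tsum (t : ℝ) : Real.exp t = ∑' n : ℕ, t ^ n / (Nat.factorial n) := by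
  rw [Real.exp_eq_exp_ℝ, NormedSpace.exp_eq_tsum_div]

-- the key lemma, lintegral form
lemma lintegralA {a s : ℝ} (ha : 0 ≤ a) (hs : 0 < s) :
    ∫⁻ x in Ioi (0:ℝ), ENNReal.ofReal (x * Real.exp (-(s * x^2)/2) * besselI0 (a*x)) =
      ENNReal.ofReal ((1/s) * Real.exp (a^2/(2*s))) := by
  set g : ℕ → ℝ → ℝ := fun n x =>
    (a^2/4)^n / ((Nat.factorial n : ℝ))^2 * (x ^ (2*n+1) * Real.exp (-(s/2) * x^2)) with hg
  have hterm : ∀ (n : ℕ) (x : ℝ),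
      x * Real.exp (-(s * x^2)/2) * (((a*x)^2/4)^n / ((Nat.factorial n : ℝ))^2) = g n x := by
    intro n x
    rw [hg]; simp only
    rw [show ((a*x)^2/4) = (a^2/4) * x^2 by ring, mul_pow,
      show -(s * x^2)/2 = -(s/2) * x^2 by ring, ← pow_mul]
    ring
  have hfg : ∀ x : ℝ, x * Real.exp (-(s * x^2)/2) * besselI0 (a*x) = ∑' n, g n x := by
    intro x
    rw [besselI0, ← tsum_mul_left]
    exact tsum_congr (fun n => hterm n x)
  have hgs : ∀ x : ℝ, Summable (fun n => g n x) :=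
    fun x => (((besselI0_summable (a*x)).mul_left
      (x * Real.exp (-(s * x^2)/2)))).congr (fun n => hterm n x)
  have hgnn : ∀ (n : ℕ) (x : ℝ), x ∈ Ioi (0:ℝ) → 0 ≤ g n x := by
    intro n x hx
    have hx' : (0:ℝ) ≤ x := (le_of_lt hx)
    rw [hg]; positivity
  calc ∫⁻ x in Ioi (0:ℝ), ENNReal.ofReal (x * Real.exp (-(s * x^2)/2) * besselI0 (a*x))
      = ∫⁻ x in Ioi (0:ℝ), ∑' n, ENNReal.ofReal (g n x) := by
        refine setLIntegral_congr_fun measurableSet_Ioi ?_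
        intro x hx
        dsimp only
        rw [hfg x, ENNReal.ofReal_tsum_of_nonneg (fun n => hgnn n x hx) (hgs x)]
    _ = ∑' n, ∫⁻ x in Ioi (0:ℝ), ENNReal.ofReal (g n x) := by
        refine lintegral_tsum (fun n => ?_)
        refine (ENNReal.measurable_ofReal.comp ?_).aemeasurable
        fun_prop
    _ = ∑' n, ENNReal.ofReal ((a^2/4)^n / ((Nat.factorial n : ℝ))^2 * ((2/s)^n * (Nat.factorial n) / s)) := by
        refine tsum_congr (fun n => ?_)
        rw [← ofReal_integral_eq_lintegral_ofReal
          ((term_integrableOn hs n).const_mul _)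
          ((ae_restrict_iff' measurableSet_Ioi).2 (Filter.Eventually.of_forall (fun x hx => hgnn n x hx)))]
        rw [MeasureTheory.integral_const_mul, term_integral hs n]
    _ = ENNReal.ofReal ((1/s) * Real.exp (a^2/(2*s))) := by
        have key : ∀ n : ℕ, (a^2/4)^n / ((Nat.factorial n : ℝ))^2 * ((2/s)^n * (Nat.factorial n) / s)
            = (1/s) * ((a^2/4 * (2/s))^n / (Nat.factorial n)) := by
          intro n
          have h1 : ((Nat.factorial n : ℝ)) ≠ 0 := Nat.cast_ne_zero.2 (Nat.factorial_ne_zero n)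
          rw [mul_pow]
          field_simp
        have harg : a^2/4 * (2/s) = a^2/(2*s) := by
          rw [div_mul_div_comm]
          rw [show a^2*2 = 2*(a^2) by ring, show (4:ℝ)*s = 2*(2*s) by ring,
            mul_div_mul_left _ _ (by norm_num : (2:ℝ) ≠ 0)]
        rw [← ENNReal.ofReal_tsum_of_nonneg]
        · congr 1
          rw [tsum_congr key, tsum_mul_left, ← exp_tsum, harg]
        · intro n; positivity
        · exact (((Real.summable_pow_div_factorial (a^2/4*(2/s))).mul_left (1/s))).congr
            (fun n => (key n).symm)

lemma measurableA (a s : ℝ) :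
    Measurable (fun x : ℝ => x * Real.exp (-(s * x^2)/2) * besselI0 (a*x)) := by
  exact (measurable_id.mul (by fun_prop)).mul (measurable_besselI0.comp (measurable_const_mul a))

lemma nonnegA (a s : ℝ) :
    0 ≤ᵐ[volume.restrict (Ioi (0:ℝ))] (fun x : ℝ => x * Real.exp (-(s * x^2)/2) * besselI0 (a*x)) := by
  refine (ae_restrict_iff' measurableSet_Ioi).2 (Filter.Eventually.of_forall (fun x hx => ?_))
  have hx' : (0:ℝ) ≤ x := le_of_lt hx
  have := besselI0_nonneg (a*x)
  positivity

lemma integrableA {a s : ℝ} (ha : 0 ≤ a) (hs : 0 < s) :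
    IntegrableOn (fun x : ℝ => x * Real.exp (-(s * x^2)/2) * besselI0 (a*x)) (Ioi 0) := by
  refine ⟨((measurableA a s).aestronglyMeasurable), ?_⟩
  rw [hasFiniteIntegral_iff_ofReal (nonnegA a s), lintegralA ha hs]
  exact ENNReal.ofReal_lt_top

lemma integralA {a s : ℝ} (ha : 0 ≤ a) (hs : 0 < s) :
    ∫ x in Ioi (0:ℝ), x * Real.exp (-(s * x^2)/2) * besselI0 (a*x) =
      (1/s) * Real.exp (a^2/(2*s)) := by
  rw [MeasureTheory.integral_eq_lintegral_of_nonneg_ae (nonnegA a s)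
    ((measurableA a s).aestronglyMeasurable), lintegralA ha hs, ENNReal.toReal_ofReal (by positivity)]

section Q
variable {e : ℝ} (he : 0 ≤ e)

lemma gQ_eq (e y : ℝ) : y * Real.exp (-(y^2 + e^2)/2) * besselI0 (e*y) =
    Real.exp (-(e^2)/2) * (y * Real.exp (-(1*y^2)/2) * besselI0 (e*y)) := by
  rw [show -(y^2+e^2)/2 = -(e^2)/2 + -(1*y^2)/2 by ring, Real.exp_add]
  ring

lemma measurable_gQ (e : ℝ) :
    Measurable (fun y : ℝ => y * Real.exp (-(y^2 + e^2)/2) * besselI0 (e*y)) := by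
  exact (measurable_id.mul (by fun_prop)).mul (measurable_besselI0.comp (measurable_const_mul e))

include he in
lemma integrable_gQ {b : ℝ} (hb : 0 ≤ b) :
    IntegrableOn (fun y : ℝ => y * Real.exp (-(y^2 + e^2)/2) * besselI0 (e*y)) (Ioi b) := by
  have h : IntegrableOn (fun y : ℝ => y * Real.exp (-(y^2 + e^2)/2) * besselI0 (e*y)) (Ioi 0) := by
    have := ((integrableA he one_pos).const_mul (Real.exp (-(e^2)/2)))
    exact IntegrableOn.congr_fun this (fun y _ => (gQ_eq e y).symm) measurableSet_Ioi
  exact h.mono_set (Ioi_subset_Ioi hb)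

include he in
lemma marcumQ_zero : marcumQ e 0 = 1 := by
  rw [marcumQ]
  rw [setIntegral_congr_fun measurableSet_Ioi (fun y _ => gQ_eq e y),
    MeasureTheory.integral_const_mul, integralA he one_pos]
  norm_num
  rw [← Real.exp_add, show -e ^ 2 / 2 + e ^ 2 / 2 = (0:ℝ) by ring, Real.exp_zero]

include he in
lemma marcumQ_nonneg {b : ℝ} (hb : 0 ≤ b) : 0 ≤ marcumQ e b := by
  refine setIntegral_nonneg measurableSet_Ioi (fun y hy => ?_)
  have hy' : (0:ℝ) ≤ y := le_trans hb (le_of_lt hy)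
  have := besselI0_nonneg (e*y)
  positivity

include he in
lemma marcumQ_antitone {b₁ b₂ : ℝ} (hb₁ : 0 ≤ b₁) (h : b₁ ≤ b₂) :
    marcumQ e b₂ ≤ marcumQ e b₁ := by
  refine setIntegral_mono_set (integrable_gQ he hb₁) ?_
    (HasSubset.Subset.eventuallyLE (Ioi_subset_Ioi h))
  refine (ae_restrict_iff' measurableSet_Ioi).2 (Filter.Eventually.of_forall (fun y hy => ?_))
  have hy' : (0:ℝ) ≤ y := le_trans hb₁ (le_of_lt hy)
  have := besselI0_nonneg (e*y)
  positivity

include he in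
lemma measurable_Qmax : Measurable (fun b : ℝ => marcumQ e (max b 0)) := by
  have : Antitone (fun b : ℝ => marcumQ e (max b 0)) := by
    intro b₁ b₂ h
    exact marcumQ_antitone he (le_max_right b₁ 0) (max_le_max h le_rfl)
  exact this.measurable

end Q

lemma int_exp_Ioi {k : ℝ} (hk : 0 < k) :
    ∫ x in Ioi (0:ℝ), Real.exp (-k*x) = 1/k := by
  have h := integral_exp_neg_mul_rpow one_pos hk
  rw [show ∫ x in Ioi (0:ℝ), Real.exp (-k * x ^ (1:ℝ)) = ∫ x in Ioi (0:ℝ), Real.exp (-k*x) from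
    setIntegral_congr_fun measurableSet_Ioi (fun x hx => by rw [rpow_one])] at h
  rw [h, show (-1:ℝ)/1 = -1 by norm_num, Real.rpow_neg_one,
    show (1:ℝ)/1+1 = 2 by norm_num, Real.Gamma_two, one_div, mul_one]

lemma hasDeriv_exp_neg {k : ℝ} (hk : k ≠ 0) (x : ℝ) :
    HasDerivAt (fun x : ℝ => -(Real.exp (-k*x)/k)) (Real.exp (-k*x)) x := by
  have h1 : HasDerivAt (fun x : ℝ => -k*x) (-k) x := by
    simpa using (hasDerivAt_id x).const_mul (-k)
  have h2 := (h1.exp.div_const k).neg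
  refine h2.congr_deriv ?_
  field_simp
lemma int_exp_Ioo {k B : ℝ} (hk : 0 < k) (hB : 0 ≤ B) :
    ∫ x in Ioo (0:ℝ) B, Real.exp (-k*x) = (1 - Real.exp (-k*B))/k := by
  rw [← integral_Ioc_eq_integral_Ioo, ← intervalIntegral.integral_of_le hB]
  rw [intervalIntegral.integral_eq_sub_of_hasDerivAt (fun x _ => hasDeriv_exp_neg (ne_of_gt hk) x)
    ((Real.continuous_exp.comp (continuous_const.mul continuous_id)).intervalIntegrable 0 B)]
  field_simp
  simp only [mul_zero, neg_zero, Real.exp_zero]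
  ring

lemma sqrt_cond {f y x : ℝ} (hf : 0 < f) (hy : 0 < y) (hx : 0 < x) :
    f * Real.sqrt (2*x) < y ↔ x < y^2/(2*f^2) := by
  rw [mul_comm, ← lt_div_iff₀ hf,
    show y/f = Real.sqrt ((y/f)^2) from (Real.sqrt_sq (by positivity)).symm,
    Real.sqrt_lt_sqrt_iff (by positivity), div_pow,
    lt_div_iff₀ (by positivity : (0:ℝ) < f^2), lt_div_iff₀ (by positivity : (0:ℝ) < 2*f^2)]
  constructor <;> intro h <;> nlinarith

theorem stmt_1 (c e f : ℝ) (hc : 0 < c) (he : 0 ≤ e) (hf : 0 ≤ f) :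
    IntegrableOn (fun x : ℝ => Real.exp (-(c ^ 2) * x) * marcumQ e (f * Real.sqrt (2 * x)))
      (Set.Ioi 0) ∧
    ∫ x in Set.Ioi (0 : ℝ), Real.exp (-(c ^ 2) * x) * marcumQ e (f * Real.sqrt (2 * x)) =
      (1 / c ^ 2) *
        (1 - (f ^ 2 / (c ^ 2 + f ^ 2)) *
          Real.exp (-(c ^ 2 * e ^ 2) / (2 * (c ^ 2 + f ^ 2)))) := by
  have hc2 : (0:ℝ) < c^2 := by positivity
  rcases eq_or_lt_of_le hf with hf0 | hfpos
  · -- case f = 0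
    subst hf0
    simp only [zero_mul, marcumQ_zero he, mul_one]
    constructor
    · exact exp_neg_integrableOn_Ioi 0 hc2
    · rw [int_exp_Ioi hc2]
      norm_num
  · -- case 0 < f
    set gQ : ℝ → ℝ := fun y => y * Real.exp (-(y^2 + e^2)/2) * besselI0 (e*y) with hgQ
    set F : ℝ → ℝ := fun x => Real.exp (-(c^2) * x) * marcumQ e (f * Real.sqrt (2*x)) with hF
    set V : ℝ := (1 / c ^ 2) * (1 - (f ^ 2 / (c ^ 2 + f ^ 2)) *
          Real.exp (-(c ^ 2 * e ^ 2) / (2 * (c ^ 2 + f ^ 2)))) with hV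
    have hVnn : 0 ≤ V := by
      rw [hV]
      have h1 : f^2/(c^2+f^2) ≤ 1 := by
        rw [div_le_one (by positivity)]; nlinarith
      have h2 : Real.exp (-(c ^ 2 * e ^ 2) / (2 * (c ^ 2 + f ^ 2))) ≤ 1 := by
        rw [Real.exp_le_one_iff]
        apply div_nonpos_of_nonpos_of_nonneg
        · exact neg_nonpos.mpr (by positivity)
        · positivity
      have h3 : f^2/(c^2+f^2) * Real.exp (-(c ^ 2 * e ^ 2) / (2 * (c ^ 2 + f ^ 2))) ≤ 1 := by
        calc _ ≤ f^2/(c^2+f^2) * 1 := by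
                  exact mul_le_mul_of_nonneg_left h2 (by positivity)
          _ ≤ 1 := by rwa [mul_one]
      have : (0:ℝ) ≤ 1/c^2 := by positivity
      nlinarith
    -- the product function
    set S : Set (ℝ × ℝ) := {p : ℝ × ℝ | 0 < p.1 ∧ f * Real.sqrt (2*p.1) < p.2} with hS
    set G : ℝ × ℝ → ℝ≥0∞ :=
      S.indicator (fun p => ENNReal.ofReal (Real.exp (-(c^2) * p.1) * gQ p.2)) with hG
    have hSmeas : MeasurableSet S := by
      apply MeasurableSet.inter
      · exact measurable_fst measurableSet_Ioi
      · exact measurableSet_lt (by fun_prop) measurable_snd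
    have hGmeas : Measurable G := by
      refine Measurable.indicator ?_ hSmeas
      refine ENNReal.measurable_ofReal.comp ?_
      exact ((measurable_fst.const_mul _).exp).mul ((measurable_gQ e).comp measurable_snd)
    have hswap := lintegral_lintegral_swap (μ := volume) (ν := volume)
      (f := fun x y => G (x, y)) hGmeas.aemeasurable
    have hgQnn : ∀ y : ℝ, 0 ≤ y → 0 ≤ gQ y := by
      intro y hy
      have := besselI0_nonneg (e*y)
      rw [hgQ]
      positivity
    have h1 : ∀ x : ℝ, (∫⁻ y, G (x, y)) =
        (Ioi (0:ℝ)).indicator (fun x => ENNReal.ofReal (F x)) x := by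
      intro x
      by_cases hx : 0 < x
      · have hb : 0 ≤ f * Real.sqrt (2*x) := by positivity
        have hGx : ∀ y, G (x,y) = (Ioi (f * Real.sqrt (2*x))).indicator
            (fun y => ENNReal.ofReal (Real.exp (-(c^2)*x) * gQ y)) y := by
          intro y
          rw [hG]
          simp only [Set.indicator_apply, hS, mem_setOf_eq, mem_Ioi]
          by_cases h : f * Real.sqrt (2*x) < y <;> simp [h, hx]
        rw [lintegral_congr hGx, lintegral_indicator measurableSet_Ioi,
          Set.indicator_of_mem (mem_Ioi.2 hx)]
        have hint : Integrable (fun y => Real.exp (-(c^2)*x) * gQ y)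
            (volume.restrict (Ioi (f * Real.sqrt (2*x)))) :=
          (integrable_gQ he hb).const_mul _
        have hnn : 0 ≤ᵐ[volume.restrict (Ioi (f * Real.sqrt (2*x)))]
            (fun y => Real.exp (-(c^2)*x) * gQ y) := by
          refine (ae_restrict_iff' measurableSet_Ioi).2 (Filter.Eventually.of_forall
            (fun y hy => ?_))
          exact mul_nonneg (Real.exp_pos _).le (hgQnn y (le_trans hb (le_of_lt hy)))
        rw [← ofReal_integral_eq_lintegral_ofReal hint hnn,
          MeasureTheory.integral_const_mul]
        rfl
      · have hall : ∀ y, G (x,y) = 0 := by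
          intro y
          refine Set.indicator_of_notMem ?_ _
          rw [hS]
          simp only [mem_setOf_eq, not_and]
          intro h; exact absurd h hx
        rw [lintegral_congr hall, lintegral_zero,
          Set.indicator_of_notMem (by simpa using hx)]
    have hLHS : (∫⁻ x, ∫⁻ y, G (x, y)) = ∫⁻ x in Ioi 0, ENNReal.ofReal (F x) := by
      rw [lintegral_congr h1, lintegral_indicator measurableSet_Ioi]
    -- RHS of the swap
    have h2 : ∀ y : ℝ, (∫⁻ x, G (x, y)) = (Ioi (0:ℝ)).indicator
        (fun y => ENNReal.ofReal ((1/c^2) * (gQ y - gQ y * Real.exp (-(c^2) * (y^2/(2*f^2)))))) y := by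
      intro y
      by_cases hy : 0 < y
      · have hBpos : 0 < y^2/(2*f^2) := by positivity
        have hset : ∀ x, G (x,y) = (Ioo (0:ℝ) (y^2/(2*f^2))).indicator
            (fun x => ENNReal.ofReal (Real.exp (-(c^2)*x) * gQ y)) x := by
          intro x
          rw [hG]
          simp only [Set.indicator_apply, hS, mem_setOf_eq, mem_Ioo]
          by_cases hx : 0 < x
          · simp only [hx, true_and, sqrt_cond hfpos hy hx]
          · simp [hx]
        rw [lintegral_congr hset, lintegral_indicator measurableSet_Ioo,
          Set.indicator_of_mem (mem_Ioi.2 hy)]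
        have hint : Integrable (fun x => Real.exp (-(c^2)*x) * gQ y)
            (volume.restrict (Ioo (0:ℝ) (y^2/(2*f^2)))) := by
          have hcont : Continuous (fun x : ℝ => Real.exp (-(c^2)*x) * gQ y) :=
            (Real.continuous_exp.comp (continuous_const.mul continuous_id)).mul continuous_const
          have h1 : IntegrableOn (fun x : ℝ => Real.exp (-(c^2)*x) * gQ y)
              (Icc 0 (y^2/(2*f^2))) volume := hcont.integrableOn_Icc
          exact h1.mono_set Ioo_subset_Icc_self
        have hnn : 0 ≤ᵐ[volume.restrict (Ioo (0:ℝ) (y^2/(2*f^2)))]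
            (fun x => Real.exp (-(c^2)*x) * gQ y) :=
          Filter.Eventually.of_forall (fun x =>
            mul_nonneg (Real.exp_pos _).le (hgQnn y (le_of_lt hy)))
        rw [← ofReal_integral_eq_lintegral_ofReal hint hnn,
          MeasureTheory.integral_mul_const, int_exp_Ioo hc2 (le_of_lt hBpos)]
        congr 1
        ring
      · have hall : ∀ x, G (x,y) = 0 := by
          intro x
          refine Set.indicator_of_notMem ?_ _
          rw [hS]
          simp only [mem_setOf_eq, not_and]
          intro _
          have : (0:ℝ) ≤ f * Real.sqrt (2*x) := by positivity
          push_neg at hy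
          exact not_lt.2 (le_trans hy this)
        rw [lintegral_congr hall, lintegral_zero,
          Set.indicator_of_notMem (by simpa using hy)]
    set s₂ : ℝ := (c^2+f^2)/f^2 with hs₂def
    have hs₂ : 0 < s₂ := by positivity
    have hprod : ∀ y : ℝ, gQ y * Real.exp (-(c^2) * (y^2/(2*f^2))) =
        Real.exp (-(e^2)/2) * (y * Real.exp (-(s₂*y^2)/2) * besselI0 (e*y)) := by
      intro y
      have hexp : Real.exp (-(y^2+e^2)/2) * Real.exp (-(c^2) * (y^2/(2*f^2))) =
          Real.exp (-(e^2)/2) * Real.exp (-(s₂*y^2)/2) := by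
        rw [← Real.exp_add, ← Real.exp_add]
        congr 1
        rw [hs₂def]
        field_simp
        ring
      rw [hgQ]
      simp only
      linear_combination (y * besselI0 (e*y)) * hexp
    have hint1 : IntegrableOn gQ (Ioi 0) := integrable_gQ he le_rfl
    have hint2 : IntegrableOn (fun y => gQ y * Real.exp (-(c^2)*(y^2/(2*f^2)))) (Ioi 0) := by
      refine IntegrableOn.congr_fun ?_ (fun y _ => (hprod y).symm) measurableSet_Ioi
      exact (integrableA he hs₂).const_mul _
    have hnn' : 0 ≤ᵐ[volume.restrict (Ioi (0:ℝ))]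
        (fun y => (1/c^2) * (gQ y - gQ y * Real.exp (-(c^2) * (y^2/(2*f^2))))) := by
      refine (ae_restrict_iff' measurableSet_Ioi).2 (Filter.Eventually.of_forall
        (fun y hy => ?_))
      have h1 := hgQnn y (le_of_lt hy)
      have h2 : Real.exp (-(c^2) * (y^2/(2*f^2))) ≤ 1 := by
        rw [Real.exp_le_one_iff]
        have : (0:ℝ) ≤ c^2 * (y^2/(2*f^2)) := by positivity
        linarith
      have h3 : 0 ≤ gQ y - gQ y * Real.exp (-(c^2) * (y^2/(2*f^2))) := by nlinarith
      positivity
    have hRHS : (∫⁻ y, ∫⁻ x, G (x, y)) = ENNReal.ofReal V := by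
      have hint3 : IntegrableOn
          (fun y => (1/c^2) * (gQ y - gQ y * Real.exp (-(c^2) * (y^2/(2*f^2))))) (Ioi 0) := by
        have := (hint1.sub hint2).const_mul (1/c^2)
        simpa [IntegrableOn] using this
      rw [lintegral_congr h2, lintegral_indicator measurableSet_Ioi,
        ← ofReal_integral_eq_lintegral_ofReal hint3 hnn']
      congr 1
      rw [MeasureTheory.integral_const_mul, integral_sub hint1 hint2]
      have hQ0 : ∫ y in Ioi (0:ℝ), gQ y = 1 := marcumQ_zero he
      have hI2 : ∫ y in Ioi (0:ℝ), gQ y * Real.exp (-(c^2)*(y^2/(2*f^2))) =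
          Real.exp (-(e^2)/2) * ((1/s₂) * Real.exp (e^2/(2*s₂))) := by
        rw [setIntegral_congr_fun measurableSet_Ioi (fun y _ => hprod y),
          MeasureTheory.integral_const_mul, integralA he hs₂]
      rw [hQ0, hI2, hV]
      have h1s : (1:ℝ)/s₂ = f^2/(c^2+f^2) := by
        rw [hs₂def, one_div_div]
      have hexp2 : Real.exp (-(e^2)/2) * Real.exp (e^2/(2*s₂)) =
          Real.exp (-(c^2*e^2)/(2*(c^2+f^2))) := by
        rw [← Real.exp_add]
        congr 1
        rw [hs₂def]
        field_simp
        ring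
      rw [h1s]
      rw [show Real.exp (-(e^2)/2) * (f^2/(c^2+f^2) * Real.exp (e^2/(2*s₂)))
          = f^2/(c^2+f^2) * (Real.exp (-(e^2)/2) * Real.exp (e^2/(2*s₂))) by ring, hexp2]
    -- conclude
    have hL : (∫⁻ x in Ioi (0:ℝ), ENNReal.ofReal (F x)) = ENNReal.ofReal V := by
      rw [← hLHS, hswap, hRHS]
    have hFmeas : AEStronglyMeasurable F (volume.restrict (Ioi 0)) := by
      have hFeq : F = fun x => Real.exp (-(c^2)*x) *
          (fun b => marcumQ e (max b 0)) (f * Real.sqrt (2*x)) := by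
        funext x
        rw [hF]
        simp only
        congr 2
        rw [max_eq_left (by positivity)]
      rw [hFeq]
      exact ((by fun_prop : Measurable fun x : ℝ => Real.exp (-(c^2)*x)).mul
        ((measurable_Qmax he).comp (by fun_prop))).aestronglyMeasurable
    have hFnn : 0 ≤ᵐ[volume.restrict (Ioi (0:ℝ))] F :=
      Filter.Eventually.of_forall (fun x =>
        mul_nonneg (Real.exp_pos _).le (marcumQ_nonneg he (by positivity)))
    constructor
    · exact ⟨hFmeas, (hasFiniteIntegral_iff_ofReal hFnn).2 (hL ▸ ENNReal.ofReal_lt_top)⟩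
    · rw [show (∫ x in Ioi (0:ℝ), Real.exp (-(c^2)*x) * marcumQ e (f * Real.sqrt (2*x))) =
          ∫ x in Ioi (0:ℝ), F x from rfl,
        integral_eq_lintegral_of_nonneg_ae hFnn hFmeas, hL, ENNReal.toReal_ofReal hVnn]
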